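/- Let γ > 0, s > 0, μ ∈ ℝ, x ∈ ℝ and p > 0. For T > 0 define m_T = μ + (x − μ)·exp(−γT) and v_T = (s²/(2γ))·(1 − exp(−2γT)). Then the function T ↦ (1/T)·log(∫ exp(p·|y|) d(gaussianReal m_T v_T)(y)) tends to 0 as T → ∞. -/

import Mathlib

open MeasureTheory ProbabilityTheory Filter
open scoped NNReal ENNReal

lemma gaussianPDF_eq_coe_toNNReal (m : ℝ) (v : ℝ≥0) :
    gaussianPDF m v = fun y => ((Real.toNNReal (gaussianPDFReal m v y) : ℝ≥0) : ℝ≥0∞) := by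
  ext y
  simp [gaussianPDF, ENNReal.ofReal]

lemma gaussianPDFReal_mul_exp (m : ℝ) (v : ℝ≥0) (hv : v ≠ 0) (t y : ℝ) :
    gaussianPDFReal m v y * Real.exp (t * y)
      = Real.exp (t * m + t ^ 2 * v / 2) * gaussianPDFReal (m + t * v) v y := by
  have hv' : (0 : ℝ) < v := by
    have := v.coe_nonneg
    rcases this.lt_or_eq with h | h
    · exact h
    · exact absurd (by exact_mod_cast h.symm) hv
  have h2v : (2 : ℝ) * v ≠ 0 := by positivity
  simp only [gaussianPDFReal]
  rw [mul_assoc, ← Real.exp_add, mul_left_comm, ← Real.exp_add]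
  congr 1
  field_simp
  ring

lemma integrable_exp_mul_gaussianReal (m : ℝ) (v : ℝ≥0) (hv : v ≠ 0) (t : ℝ) :
    Integrable (fun y => Real.exp (t * y)) (gaussianReal m v) := by
  rw [gaussianReal_of_var_ne_zero m hv, gaussianPDF_eq_coe_toNNReal,
    integrable_withDensity_iff_integrable_smul ((measurable_gaussianPDFReal m v).real_toNNReal)]
  have : (fun y => (Real.toNNReal (gaussianPDFReal m v y)) • Real.exp (t * y))
      = fun y => Real.exp (t * m + t ^ 2 * v / 2) * gaussianPDFReal (m + t * v) v y := by
    ext y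
    rw [NNReal.smul_def, smul_eq_mul, Real.coe_toNNReal _ (gaussianPDFReal_nonneg m v y),
      gaussianPDFReal_mul_exp m v hv t y]
  rw [this]
  exact (integrable_gaussianPDFReal _ _).const_mul _

lemma integral_exp_mul_gaussianReal (m : ℝ) (v : ℝ≥0) (hv : v ≠ 0) (t : ℝ) :
    ∫ y, Real.exp (t * y) ∂(gaussianReal m v) = Real.exp (t * m + t ^ 2 * v / 2) := by
  rw [gaussianReal_of_var_ne_zero m hv, gaussianPDF_eq_coe_toNNReal,
    integral_withDensity_eq_integral_smul ((measurable_gaussianPDFReal m v).real_toNNReal)]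
  have : (fun y => (Real.toNNReal (gaussianPDFReal m v y)) • Real.exp (t * y))
      = fun y => Real.exp (t * m + t ^ 2 * v / 2) * gaussianPDFReal (m + t * v) v y := by
    ext y
    rw [NNReal.smul_def, smul_eq_mul, Real.coe_toNNReal _ (gaussianPDFReal_nonneg m v y),
      gaussianPDFReal_mul_exp m v hv t y]
  rw [this, integral_const_mul, integral_gaussianPDFReal_eq_one _ hv, mul_one]

lemma exp_abs_le_add (p y : ℝ) :
    Real.exp (p * |y|) ≤ Real.exp (p * y) + Real.exp (-p * y) := by
  rcases abs_cases y with ⟨h, _⟩ | ⟨h, _⟩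
  · rw [h]; exact le_add_of_nonneg_right (Real.exp_pos _).le
  · rw [h, mul_neg, ← neg_mul]; exact le_add_of_nonneg_left (Real.exp_pos _).le

lemma integrable_exp_abs_gaussianReal (m : ℝ) (v : ℝ≥0) (hv : v ≠ 0) (p : ℝ) :
    Integrable (fun y => Real.exp (p * |y|)) (gaussianReal m v) := by
  refine Integrable.mono ((integrable_exp_mul_gaussianReal m v hv p).add
    (integrable_exp_mul_gaussianReal m v hv (-p)))
    ((Real.continuous_exp.comp (continuous_const.mul continuous_abs)).aestronglyMeasurable)
    (ae_of_all _ fun y => ?_)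
  simp only [Pi.add_apply, Real.norm_eq_abs, Real.abs_exp]
  rw [abs_of_nonneg (by positivity : (0 : ℝ) ≤ Real.exp (p * y) + Real.exp (-p * y))]
  exact exp_abs_le_add p y

lemma integral_exp_abs_gaussianReal_le (m : ℝ) (v : ℝ≥0) (hv : v ≠ 0) {p : ℝ} (hp : 0 ≤ p) :
    (∫ y, Real.exp (p * |y|) ∂(gaussianReal m v))
      ≤ 2 * Real.exp (p * |m| + p ^ 2 * v / 2) := by
  have h1 := integrable_exp_mul_gaussianReal m v hv p
  have h2 := integrable_exp_mul_gaussianReal m v hv (-p)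
  calc (∫ y, Real.exp (p * |y|) ∂(gaussianReal m v))
      ≤ ∫ y, (Real.exp (p * y) + Real.exp (-p * y)) ∂(gaussianReal m v) :=
        integral_mono (integrable_exp_abs_gaussianReal m v hv p) (h1.add h2)
          fun y => exp_abs_le_add p y
    _ = Real.exp (p * m + p ^ 2 * v / 2) + Real.exp (-p * m + (-p) ^ 2 * v / 2) := by
        rw [integral_add h1 h2, integral_exp_mul_gaussianReal m v hv p,
          integral_exp_mul_gaussianReal m v hv (-p)]
    _ ≤ 2 * Real.exp (p * |m| + p ^ 2 * v / 2) := by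
        rw [two_mul]
        have e1 : p * m + p ^ 2 * (v : ℝ) / 2 ≤ p * |m| + p ^ 2 * (v : ℝ) / 2 := by
          have := mul_le_mul_of_nonneg_left (le_abs_self m) hp
          linarith
        have e2 : -p * m + (-p) ^ 2 * (v : ℝ) / 2 ≤ p * |m| + p ^ 2 * (v : ℝ) / 2 := by
          rw [neg_sq]
          have h1 : -p * m = p * (-m) := by ring
          have := mul_le_mul_of_nonneg_left (neg_le_abs m) hp
          linarith
        exact add_le_add (Real.exp_le_exp.mpr e1) (Real.exp_le_exp.mpr e2)

lemma one_le_integral_exp_abs_gaussianReal (m : ℝ) (v : ℝ≥0) (hv : v ≠ 0) {p : ℝ} (hp : 0 ≤ p) :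
    1 ≤ ∫ y, Real.exp (p * |y|) ∂(gaussianReal m v) := by
  have : (1 : ℝ) = ∫ _ : ℝ, (1 : ℝ) ∂(gaussianReal m v) := by simp
  rw [this]
  exact integral_mono (integrable_const 1) (integrable_exp_abs_gaussianReal m v hv p)
    fun y => Real.one_le_exp (by positivity)

/-- for the Ornstein–Uhlenbeck process
`dX_t = γ(μ − X_t)dt + s dW_t` started at `x`, whose marginal `X_T` is Gaussian
with mean `m_T = μ + (x − μ)e^{−γT}` and variance
`v_T = (s²/(2γ))(1 − e^{−2γT})`, one has
`(1/T) ln E[exp(p|X_T|)] → 0` as `T → ∞` (Example 2.2 of the paper). -/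
theorem ou_admissibility_limit
    (γ s μ x p : ℝ) (hγ : 0 < γ) (hs : 0 < s) (hp : 0 < p) :
    Tendsto
      (fun T : ℝ =>
        (1 / T) * Real.log (∫ y,
          Real.exp (p * |y|)
            ∂(gaussianReal (μ + (x - μ) * Real.exp (-γ * T))
              (Real.toNNReal (s ^ 2 / (2 * γ) * (1 - Real.exp (-2 * γ * T)))))))
      atTop (nhds 0) := by
  set C : ℝ := Real.log (2 * Real.exp (p * (|μ| + |x - μ|) + p ^ 2 * (s ^ 2 / (2 * γ)) / 2))
    with hC
  have hCtend : Tendsto (fun T : ℝ => C * T⁻¹) atTop (nhds 0) := by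
    have := tendsto_inv_atTop_zero.const_mul C
    simpa using this
  refine tendsto_of_tendsto_of_tendsto_of_le_of_le' tendsto_const_nhds hCtend ?_ ?_
  · filter_upwards [eventually_ge_atTop (1 : ℝ)] with T hT
    have hT0 : (0 : ℝ) < T := lt_of_lt_of_le one_pos hT
    have hvpos : 0 < s ^ 2 / (2 * γ) * (1 - Real.exp (-2 * γ * T)) := by
      have hexp : Real.exp (-2 * γ * T) < 1 := by
        rw [Real.exp_lt_one_iff]
        nlinarith
      have : (0 : ℝ) < s ^ 2 / (2 * γ) := by positivity
      nlinarith
    have hv : Real.toNNReal (s ^ 2 / (2 * γ) * (1 - Real.exp (-2 * γ * T))) ≠ 0 := by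
      simp only [ne_eq, Real.toNNReal_eq_zero, not_le]
      exact hvpos
    exact mul_nonneg (by positivity)
      (Real.log_nonneg (one_le_integral_exp_abs_gaussianReal _ _ hv hp.le))
  · filter_upwards [eventually_ge_atTop (1 : ℝ)] with T hT
    have hT0 : (0 : ℝ) < T := lt_of_lt_of_le one_pos hT
    set m : ℝ := μ + (x - μ) * Real.exp (-γ * T) with hm
    set vr : ℝ := s ^ 2 / (2 * γ) * (1 - Real.exp (-2 * γ * T)) with hvr
    have hexp : Real.exp (-2 * γ * T) < 1 := by
      rw [Real.exp_lt_one_iff]; nlinarith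
    have hc : (0 : ℝ) < s ^ 2 / (2 * γ) := by positivity
    have hvpos : 0 < vr := by rw [hvr]; nlinarith
    have hv : Real.toNNReal vr ≠ 0 := by
      simp only [ne_eq, Real.toNNReal_eq_zero, not_le]; exact hvpos
    have hcoe : ((Real.toNNReal vr : ℝ≥0) : ℝ) = vr := Real.coe_toNNReal _ hvpos.le
    have hvle : vr ≤ s ^ 2 / (2 * γ) := by
      rw [hvr]
      nlinarith [Real.exp_pos (-2 * γ * T)]
    have hmle : |m| ≤ |μ| + |x - μ| := by
      refine (abs_add_le _ _).trans (add_le_add_right ?_ _)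
      rw [abs_mul, abs_of_nonneg (Real.exp_pos (-γ * T)).le]
      calc |x - μ| * Real.exp (-γ * T) ≤ |x - μ| * 1 := by
            gcongr
            exact Real.exp_le_one_iff.mpr (by nlinarith)
        _ = |x - μ| := mul_one _
    have hInt := integral_exp_abs_gaussianReal_le m (Real.toNNReal vr) hv hp.le
    have hI1 := one_le_integral_exp_abs_gaussianReal m (Real.toNNReal vr) hv hp.le
    have hbound : (∫ y, Real.exp (p * |y|) ∂(gaussianReal m (Real.toNNReal vr)))
        ≤ 2 * Real.exp (p * (|μ| + |x - μ|) + p ^ 2 * (s ^ 2 / (2 * γ)) / 2) := by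
      refine hInt.trans ?_
      have harg : p * |m| + p ^ 2 * ((Real.toNNReal vr : ℝ≥0) : ℝ) / 2
          ≤ p * (|μ| + |x - μ|) + p ^ 2 * (s ^ 2 / (2 * γ)) / 2 := by
        rw [hcoe]
        have h1 := mul_le_mul_of_nonneg_left hmle hp.le
        have h2 := mul_le_mul_of_nonneg_left hvle (sq_nonneg p)
        linarith
      have := Real.exp_le_exp.mpr harg
      linarith
    have hlog : Real.log (∫ y, Real.exp (p * |y|) ∂(gaussianReal m (Real.toNNReal vr))) ≤ C := by
      rw [hC]
      exact Real.log_le_log (lt_of_lt_of_le one_pos hI1) hbound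
    calc (1 / T) * Real.log (∫ y, Real.exp (p * |y|) ∂(gaussianReal m (Real.toNNReal vr)))
        ≤ (1 / T) * C := mul_le_mul_of_nonneg_left hlog (by positivity)
      _ = C * T⁻¹ := by rw [one_div]; ring
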